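/- Let L_4 = U^{⊕3} ⊕ E8(-1)^{⊕2} ⊕ ⟨-6⟩. If v ∈ L_4 is a primitive vector with div(v) = 2, then v² ≡ 2 (mod 8). -/

import Mathlib

open Matrix

/-- Gram matrix of the hyperbolic plane `U`. -/
def U2 : Matrix (Fin 2) (Fin 2) ℤ := !![0, 1; 1, 0]

/-- Gram matrix of the negative definite `E8(-1)` lattice. -/
def E8neg : Matrix (Fin 8) (Fin 8) ℤ :=
  !![-2, 1, 0, 0, 0, 0, 0, 0;
      1,-2, 1, 0, 0, 0, 0, 0;
      0, 1,-2, 1, 0, 0, 0, 0;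
      0, 0, 1,-2, 1, 0, 0, 0;
      0, 0, 0, 1,-2, 1, 0, 1;
      0, 0, 0, 0, 1,-2, 1, 0;
      0, 0, 0, 0, 0, 1,-2, 0;
      0, 0, 0, 0, 1, 0, 0,-2]

/-- Index type of the unimodular summand `U^3 ⊕ E8(-1)^2`. -/
abbrev KIdx := (Fin 2 ⊕ (Fin 2 ⊕ Fin 2)) ⊕ (Fin 8 ⊕ Fin 8)

/-- Gram matrix of `U^3 ⊕ E8(-1)^2`. -/
def GramK : Matrix KIdx KIdx ℤ :=
  Matrix.fromBlocks
    (Matrix.fromBlocks U2 0 0 (Matrix.fromBlocks U2 0 0 U2)) 0 0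
    (Matrix.fromBlocks E8neg 0 0 E8neg)

/-- Index type of `L_n = U^3 ⊕ E8(-1)^2 ⊕ ⟨-(2n-2)⟩`. -/
abbrev LIdx := KIdx ⊕ Fin 1

/-- Gram matrix of `L_n = U^3 ⊕ E8(-1)^2 ⊕ ⟨-(2n-2)⟩`. -/
def GramL (n : ℕ) : Matrix LIdx LIdx ℤ :=
  Matrix.fromBlocks GramK 0 0 !![-(2 * (n : ℤ) - 2)]

/-- The bilinear form of `L_n`. -/
def bil (n : ℕ) (v w : LIdx → ℤ) : ℤ := v ⬝ᵥ ((GramL n).mulVec w)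

/-- The `ℚ`-bilinear extension of the form of `L_n` to `L_n ⊗ ℚ`. -/
def bilQ (n : ℕ) (v w : LIdx → ℚ) : ℚ :=
  v ⬝ᵥ (((GramL n).map (Int.cast : ℤ → ℚ)).mulVec w)

/-- The inclusion `L_n ↪ L_n ⊗ ℚ`. -/
def toQ (v : LIdx → ℤ) : LIdx → ℚ := fun i => (v i : ℚ)

/-- The generator `δ` of the summand `⟨-(2n-2)⟩`. -/
def deltaVec : LIdx → ℤ := fun i => if i = Sum.inr 0 then 1 else 0

/-- A lattice vector is primitive if it is not a nontrivial multiple of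
another lattice vector. -/
def IsPrimitive (v : LIdx → ℤ) : Prop :=
  ∀ (k : ℤ) (w : LIdx → ℤ), v = k • w → IsUnit k

/-- `HasDiv n v m` says that `div(v) = m`, i.e. `(v, L_n) = mℤ`. -/
def HasDiv (n : ℕ) (v : LIdx → ℤ) (m : ℤ) : Prop :=
  Ideal.span (Set.range fun w => bil n v w) = Ideal.span {m}

/-! ### Auxiliary material -/

/-- A "half" of `U2`. -/
def BU : Matrix (Fin 2) (Fin 2) ℤ := !![0,1;0,0]

/-- A "half" of `E8neg`. -/
def BE8 : Matrix (Fin 8) (Fin 8) ℤ :=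
  !![-1, 1, 0, 0, 0, 0, 0, 0;
      0,-1, 1, 0, 0, 0, 0, 0;
      0, 0,-1, 1, 0, 0, 0, 0;
      0, 0, 0,-1, 1, 0, 0, 0;
      0, 0, 0, 0,-1, 1, 0, 1;
      0, 0, 0, 0, 0,-1, 1, 0;
      0, 0, 0, 0, 0, 0,-1, 0;
      0, 0, 0, 0, 0, 0, 0,-1]

/-- A "half" of `GramL 4`. -/
def BL : Matrix LIdx LIdx ℤ :=
  Matrix.fromBlocks
    (Matrix.fromBlocks
      (Matrix.fromBlocks BU 0 0 (Matrix.fromBlocks BU 0 0 BU)) 0 0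
      (Matrix.fromBlocks BE8 0 0 BE8)) 0 0 !![-3]

set_option maxRecDepth 100000 in
theorem hBL : GramL 4 = BL + BLᵀ := by decide

/-- `U2` is self-inverse mod 2. -/
def U2m : Matrix (Fin 2) (Fin 2) (ZMod 2) := !![0,1;1,0]

/-- Inverse of `E8neg` mod 2. -/
def E8i : Matrix (Fin 8) (Fin 8) (ZMod 2) :=
  !![0,1,0,1,0,0,0,1;
     1,0,0,0,0,0,0,0;
     0,0,0,1,0,0,0,1;
     1,0,1,0,0,0,0,0;
     0,0,0,0,0,0,0,1;
     0,0,0,0,0,0,1,0;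
     0,0,0,0,0,1,0,1;
     1,0,1,0,1,0,1,0]

/-- A "partial inverse" of `GramL 4` mod 2. -/
def Minv : Matrix LIdx LIdx (ZMod 2) :=
  Matrix.fromBlocks
    (Matrix.fromBlocks
      (Matrix.fromBlocks U2m 0 0 (Matrix.fromBlocks U2m 0 0 U2m)) 0 0
      (Matrix.fromBlocks E8i 0 0 E8i)) 0 0 0

/-- Projector onto the unimodular part. -/
def Pm : Matrix LIdx LIdx (ZMod 2) := Matrix.fromBlocks 1 0 0 0

set_option maxRecDepth 100000 in
theorem hMinv : (GramL 4).map (Int.cast : ℤ → ZMod 2) * Minv = Pm := by decide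

theorem deltaVec_eq : deltaVec = Pi.single (Sum.inr 0) 1 := by
  funext i
  simp [deltaVec, Pi.single_apply]

set_option maxRecDepth 100000 in
theorem col_delta : (fun i => GramL 4 i (Sum.inr 0) * 1) = Pi.single (Sum.inr 0) (-6 : ℤ) := by
  decide

set_option maxRecDepth 100000 in
theorem row_delta : (fun j => GramL 4 (Sum.inr 0) j) = Pi.single (Sum.inr 0) (-6 : ℤ) := by
  decide

theorem bil_delta_right (u : LIdx → ℤ) : bil 4 u deltaVec = u (Sum.inr 0) * (-6) := by
  rw [bil, deltaVec_eq, Matrix.mulVec_single]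
  show u ⬝ᵥ (fun i => GramL 4 i (Sum.inr 0) * 1) = _
  rw [col_delta, dotProduct_single]

theorem bil_delta_left (u : LIdx → ℤ) : bil 4 deltaVec u = -6 * u (Sum.inr 0) := by
  rw [bil, deltaVec_eq, single_dotProduct, one_mul]
  show (fun j => GramL 4 (Sum.inr 0) j) ⬝ᵥ u = _
  rw [row_delta, single_dotProduct]

theorem bil_even (u : LIdx → ℤ) : bil 4 u u = 2 * (u ⬝ᵥ BL *ᵥ u) := by
  rw [bil, hBL, Matrix.add_mulVec, dotProduct_add, Matrix.mulVec_transpose,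
    dotProduct_comm u (u ᵥ* BL), ← Matrix.dotProduct_mulVec, two_mul]

theorem stmt_4 (v : LIdx → ℤ) (hprim : IsPrimitive v) (hdiv : HasDiv 4 v 2) :
    bil 4 v v ≡ 2 [ZMOD 8] := by
  -- every pairing is divisible by 2
  have h2 : ∀ w : LIdx → ℤ, (2 : ℤ) ∣ bil 4 v w := by
    intro w
    have hmem : bil 4 v w ∈ Ideal.span (Set.range fun w => bil 4 v w) :=
      Ideal.subset_span ⟨w, rfl⟩
    rw [hdiv, Ideal.mem_span_singleton] at hmem
    exact hmem
  -- hence the row vector v ᵥ* GramL 4 is divisible by 2 componentwise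
  have hrow : ∀ i : LIdx, (2 : ℤ) ∣ (v ᵥ* GramL 4) i := by
    intro i
    have := h2 (Pi.single i 1)
    rwa [bil, Matrix.dotProduct_mulVec, dotProduct_single, mul_one] at this
  -- the reduction of v mod 2 pairs to zero with the Gram matrix
  set xb : LIdx → ZMod 2 := fun j => ((v j : ZMod 2)) with hxb
  have hx : xb ᵥ* ((GramL 4).map (Int.cast : ℤ → ZMod 2)) = 0 := by
    funext i
    have : (xb ᵥ* ((GramL 4).map (Int.cast : ℤ → ZMod 2))) i
        = (((v ᵥ* GramL 4) i : ℤ) : ZMod 2) := by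
      simp [Matrix.vecMul, dotProduct, Matrix.map_apply, hxb]
    rw [this]
    have := hrow i
    simpa using (ZMod.intCast_zmod_eq_zero_iff_dvd ((v ᵥ* GramL 4) i) 2).mpr this
  -- hence xb vanishes on the unimodular part
  have hxP : xb ᵥ* Pm = 0 := by
    rw [← hMinv, ← Matrix.vecMul_vecMul, hx, Matrix.zero_vecMul]
  have hK : ∀ j : KIdx, (2 : ℤ) ∣ v (Sum.inl j) := by
    intro j
    have hcol : (fun k => Pm k (Sum.inl j)) = Pi.single (Sum.inl j) (1 : ZMod 2) := by
      funext k
      rcases k with k | k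
      · simp [Pm, Matrix.fromBlocks, Matrix.one_apply, Pi.single_apply]
      · simp [Pm, Matrix.fromBlocks, Pi.single_apply]
    have h0 : (xb ᵥ* Pm) (Sum.inl j) = 0 := by rw [hxP]; rfl
    have h1 : (xb ᵥ* Pm) (Sum.inl j) = xb (Sum.inl j) := by
      show xb ⬝ᵥ (fun k => Pm k (Sum.inl j)) = _
      rw [hcol, dotProduct_single, mul_one]
    rw [h1] at h0
    exact_mod_cast (ZMod.intCast_zmod_eq_zero_iff_dvd (v (Sum.inl j)) 2).mp h0
  -- the last coordinate is odd, by primitivity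
  set d : ℤ := v (Sum.inr 0) with hd
  have hodd : ¬ (2 : ℤ) ∣ d := by
    intro h2d
    have hv2 : v = (2 : ℤ) • (fun i => v i / 2) := by
      funext i
      rcases i with j | k
      · simpa using (Int.mul_ediv_cancel' (hK j)).symm
      · have hk : k = 0 := Subsingleton.elim _ _
        subst hk
        simpa using (Int.mul_ediv_cancel' h2d).symm
    have := hprim 2 _ hv2
    rw [Int.isUnit_iff] at this
    omega
  obtain ⟨k, hk⟩ : ∃ k, d = 2 * k + 1 := by
    rcases Int.even_or_odd d with he | ho
    · exact absurd he.two_dvd hodd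
    · obtain ⟨k, hk⟩ := ho; exact ⟨k, hk⟩
  -- split v into its even part and the delta part
  set w : LIdx → ℤ := fun i => Sum.rec (fun j => v (Sum.inl j) / 2) (fun _ => 0) i with hw
  have hv : v = (2 : ℤ) • w + d • deltaVec := by
    funext i
    rcases i with j | m
    · have : deltaVec (Sum.inl j) = 0 := by simp [deltaVec]
      simp only [Pi.add_apply, Pi.smul_apply, smul_eq_mul, this, mul_zero, add_zero, hw]
      exact (Int.mul_ediv_cancel' (hK j)).symm
    · have hm : m = 0 := Subsingleton.elim _ _
      subst hm
      have : deltaVec (Sum.inr 0) = 1 := by simp [deltaVec]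
      simp [this, hw, hd]
  -- expand the quadratic form
  have hb : bil 4 v v = 4 * bil 4 w w + 2 * d * bil 4 w deltaVec
      + 2 * d * bil 4 deltaVec w + d ^ 2 * bil 4 deltaVec deltaVec := by
    rw [hv]
    simp only [bil, Matrix.mulVec_add, Matrix.mulVec_smul, add_dotProduct,
      smul_dotProduct, dotProduct_add, dotProduct_smul, smul_eq_mul]
    ring
  have hw0 : w (Sum.inr 0) = 0 := rfl
  have hcross1 : bil 4 w deltaVec = 0 := by rw [bil_delta_right, hw0, zero_mul]
  have hcross2 : bil 4 deltaVec w = 0 := by rw [bil_delta_left, hw0, mul_zero]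
  have hdd : bil 4 deltaVec deltaVec = -6 := by
    rw [bil_delta_right]
    norm_num [deltaVec]
  obtain ⟨m, hm⟩ : ∃ m, bil 4 w w = 2 * m := ⟨_, bil_even w⟩
  have hfinal : bil 4 v v = 8 * (m - 3 * k ^ 2 - 3 * k - 1) + 2 := by
    rw [hb, hcross1, hcross2, hdd, hm, hk]
    ring
  rw [hfinal]
  show _ % (8:ℤ) = _ % (8:ℤ)
  omega
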